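/- Let X be a Banach space and 𝒜 an accretive operator on X satisfying the rank condition. For u₀ in the closure of D(𝒜) and any fixed t > 0, the sequence n ↦ (J_{t/n})^n u₀, where J_λ = (I + λ𝒜)^{−1}, is a Cauchy sequence in X (so the Crandall–Liggett exponential formula limit exists). -/

import Mathlib

open Set

private lemma sqrt_convex' (a b al be : ℝ) (ha : 0 ≤ a) (hb : 0 ≤ b) (hal : 0 ≤ al)
    (hbe : 0 ≤ be) (hs : al + be = 1) :
    al * Real.sqrt a + be * Real.sqrt b ≤ Real.sqrt (al*a + be*b) := by
  have h1 : 0 ≤ al * Real.sqrt a + be * Real.sqrt b := by positivity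
  rw [show (al*a+be*b) = al * (Real.sqrt a)^2 + be * (Real.sqrt b)^2 by
    rw [Real.sq_sqrt ha, Real.sq_sqrt hb]]
  rw [Real.le_sqrt h1]
  · nlinarith [sq_nonneg (Real.sqrt a - Real.sqrt b), mul_nonneg hal hbe,
      Real.sqrt_nonneg a, Real.sqrt_nonneg b]
  · positivity

set_option maxHeartbeats 2000000 in
/-- **Crandall–Liggett**: for an accretive operator `A` with domain `D` satisfying the rank
condition (encoded by the resolvent family `J`), and `u₀` in the closure of `D`, the
sequence `n ↦ (J_{t/n})^n u₀` is Cauchy, so the exponential formula limit exists. -/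
theorem crandall_liggett_cauchy (X : Type*) [NormedAddCommGroup X] [NormedSpace ℝ X]
    [CompleteSpace X] (D : Set X) (A : X → X) (J : ℝ → X → X)
    (haccr : ∀ lam : ℝ, 0 < lam → ∀ x ∈ D, ∀ y ∈ D,
      ‖x - y‖ ≤ ‖x - y + lam • (A x - A y)‖)
    (hJres : ∀ lam : ℝ, 0 < lam → ∀ z ∈ closure D,
      J lam z ∈ D ∧ J lam z + lam • A (J lam z) = z)
    (hJlip : ∀ lam : ℝ, 0 < lam → ∀ z ∈ closure D, ∀ w ∈ closure D,
      ‖J lam z - J lam w‖ ≤ ‖z - w‖)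
    (u₀ : X) (hu₀ : u₀ ∈ closure D) (t : ℝ) (ht : 0 < t) :
    CauchySeq (fun n : ℕ => (J (t / (n + 1 : ℝ)))^[n + 1] u₀) := by
  have hDsub : D ⊆ closure D := subset_closure
  have hJmem : ∀ lam : ℝ, 0 < lam → ∀ z ∈ closure D, J lam z ∈ closure D :=
    fun lam hl z hz => hDsub (hJres lam hl z hz).1
  -- iterates stay in the closure of D
  have hitermem : ∀ (lam : ℝ), 0 < lam → ∀ (n : ℕ), ∀ z ∈ closure D,
      (J lam)^[n] z ∈ closure D := by
    intro lam hl n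
    induction n with
    | zero => intro z hz; simpa using hz
    | succ n ih =>
      intro z hz
      rw [Function.iterate_succ_apply']
      exact hJmem lam hl _ (ih z hz)
  -- iterates are nonexpansive on the closure of D
  have hiterlip : ∀ (lam : ℝ), 0 < lam → ∀ (n : ℕ), ∀ z ∈ closure D, ∀ w ∈ closure D,
      ‖(J lam)^[n] z - (J lam)^[n] w‖ ≤ ‖z - w‖ := by
    intro lam hl n
    induction n with
    | zero => intro z _ w _; simp
    | succ n ih =>
      intro z hz w hw
      rw [Function.iterate_succ_apply', Function.iterate_succ_apply']
      exact le_trans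
        (hJlip lam hl _ (hitermem lam hl n z hz) _ (hitermem lam hl n w hw)) (ih z hz w hw)
  have hsmul : ∀ lam : ℝ, 0 < lam → ∀ z ∈ closure D,
      lam • A (J lam z) = z - J lam z := by
    intro lam hl z hz
    exact eq_sub_of_add_eq' (hJres lam hl z hz).2
  -- single resolvent step estimate on D
  have hstep : ∀ lam : ℝ, 0 < lam → ∀ x ∈ D, ‖J lam x - x‖ ≤ lam * ‖A x‖ := by
    intro lam hl x hx
    have h1 := haccr lam hl (J lam x) ((hJres lam hl x (hDsub hx)).1) x hx
    have h2 : lam • A (J lam x) = x - J lam x := hsmul lam hl x (hDsub hx)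
    have h3 : J lam x - x + lam • (A (J lam x) - A x) = -(lam • A x) := by
      rw [smul_sub, h2]; abel
    rw [h3] at h1
    calc ‖J lam x - x‖ ≤ ‖-(lam • A x)‖ := h1
      _ = lam * ‖A x‖ := by rw [norm_neg, norm_smul, Real.norm_of_nonneg hl.le]
  have tri : ∀ a b c : X, ‖a - c‖ ≤ ‖a - b‖ + ‖b - c‖ := fun a b c => by
    simpa [dist_eq_norm] using dist_triangle a b c
  -- boundary estimate
  have hbnd : ∀ (lam : ℝ), 0 < lam → ∀ x ∈ D, ∀ n : ℕ,
      ‖(J lam)^[n] x - x‖ ≤ n * lam * ‖A x‖ := by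
    intro lam hl x hx n
    induction n with
    | zero => simp
    | succ n ih =>
      have h1 : ‖(J lam)^[n+1] x - (J lam)^[n] x‖ ≤ lam * ‖A x‖ := by
        rw [Function.iterate_succ_apply]
        exact le_trans (hiterlip lam hl n _ (hJmem lam hl x (hDsub hx)) _ (hDsub hx))
          (hstep lam hl x hx)
      calc ‖(J lam)^[n+1] x - x‖
          ≤ ‖(J lam)^[n+1] x - (J lam)^[n] x‖ + ‖(J lam)^[n] x - x‖ := tri _ _ _
        _ ≤ lam * ‖A x‖ + n * lam * ‖A x‖ := add_le_add h1 ih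
        _ = (n+1 : ℕ) * lam * ‖A x‖ := by push_cast; ring
  -- the key two-parameter recursion inequality
  have hkey : ∀ (lam mu : ℝ), 0 < lam → 0 < mu → ∀ w ∈ closure D, ∀ z ∈ closure D,
      ‖J mu w - J lam z‖ ≤ (lam/(lam+mu)) * ‖w - J lam z‖
        + (mu/(lam+mu)) * ‖J mu w - z‖ := by
    intro lam mu hlam hmu w hw z hz
    have hu : J mu w ∈ D := (hJres mu hmu w hw).1
    have hv : J lam z ∈ D := (hJres lam hlam z hz).1
    have h1 : mu • A (J mu w) = w - J mu w := hsmul mu hmu w hw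
    have h2 : lam • A (J lam z) = z - J lam z := hsmul lam hlam z hz
    have hAu : A (J mu w) = mu⁻¹ • (w - J mu w) := by
      rw [← h1, smul_smul, inv_mul_cancel₀ hmu.ne', one_smul]
    have hAv : A (J lam z) = lam⁻¹ • (z - J lam z) := by
      rw [← h2, smul_smul, inv_mul_cancel₀ hlam.ne', one_smul]
    have hs : 0 < lam*mu/(lam+mu) := by positivity
    have h3 := haccr _ hs (J mu w) hu (J lam z) hv
    have hlm : lam + mu ≠ 0 := by positivity
    have hid : J mu w - J lam z + (lam*mu/(lam+mu)) • (A (J mu w) - A (J lam z))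
        = (lam/(lam+mu)) • (w - J lam z) + (mu/(lam+mu)) • (J mu w - z) := by
      rw [hAu, hAv]
      match_scalars <;> field_simp <;> ring
    rw [hid] at h3
    calc ‖J mu w - J lam z‖
        ≤ ‖(lam/(lam+mu)) • (w - J lam z) + (mu/(lam+mu)) • (J mu w - z)‖ := h3
      _ ≤ ‖(lam/(lam+mu)) • (w - J lam z)‖ + ‖(mu/(lam+mu)) • (J mu w - z)‖ :=
          norm_add_le _ _
      _ = (lam/(lam+mu)) * ‖w - J lam z‖ + (mu/(lam+mu)) * ‖J mu w - z‖ := by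
          rw [norm_smul, norm_smul, Real.norm_of_nonneg (by positivity),
            Real.norm_of_nonneg (by positivity)]
  -- the Crandall–Liggett estimate on D
  have hmain : ∀ (lam mu : ℝ), 0 < lam → 0 < mu → ∀ x ∈ D, ∀ (k n : ℕ),
      ‖(J mu)^[k] x - (J lam)^[n] x‖
        ≤ ‖A x‖ * Real.sqrt (((n:ℝ)*lam - (k:ℝ)*mu)^2 + (n:ℝ)*lam^2 + (k:ℝ)*mu^2) := by
    intro lam mu hlam hmu x hx k
    induction k with
    | zero =>
      intro n
      have h1 : ‖(J mu)^[0] x - (J lam)^[n] x‖ ≤ (n:ℝ) * lam * ‖A x‖ := by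
        rw [Function.iterate_zero_apply, norm_sub_rev]
        exact hbnd lam hlam x hx n
      have h2 : (n:ℝ)*lam ≤ Real.sqrt (((n:ℝ)*lam - (0:ℕ)*mu)^2 + (n:ℝ)*lam^2 + (0:ℕ)*mu^2) := by
        have h3 : ((n:ℝ)*lam)^2 ≤ ((n:ℝ)*lam - (0:ℕ)*mu)^2 + (n:ℝ)*lam^2 + (0:ℕ)*mu^2 := by
          push_cast
          nlinarith [mul_nonneg (Nat.cast_nonneg n : (0:ℝ) ≤ n) (sq_nonneg lam)]
        calc (n:ℝ)*lam = Real.sqrt (((n:ℝ)*lam)^2) :=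
              (Real.sqrt_sq (by positivity)).symm
          _ ≤ _ := Real.sqrt_le_sqrt h3
      calc ‖(J mu)^[0] x - (J lam)^[n] x‖ ≤ (n:ℝ) * lam * ‖A x‖ := h1
        _ = ‖A x‖ * ((n:ℝ)*lam) := by ring
        _ ≤ _ := mul_le_mul_of_nonneg_left h2 (norm_nonneg _)
    | succ k ihk =>
      intro n
      induction n with
      | zero =>
        have h1 : ‖(J mu)^[k+1] x - (J lam)^[0] x‖ ≤ ((k+1:ℕ):ℝ) * mu * ‖A x‖ := by
          rw [Function.iterate_zero_apply]
          exact hbnd mu hmu x hx (k+1)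
        have h2 : ((k+1:ℕ):ℝ)*mu ≤
            Real.sqrt (((0:ℕ)*lam - ((k+1:ℕ):ℝ)*mu)^2 + (0:ℕ)*lam^2 + ((k+1:ℕ):ℝ)*mu^2) := by
          have h3 : (((k+1:ℕ):ℝ)*mu)^2 ≤
              ((0:ℕ)*lam - ((k+1:ℕ):ℝ)*mu)^2 + (0:ℕ)*lam^2 + ((k+1:ℕ):ℝ)*mu^2 := by
            push_cast
            nlinarith [mul_nonneg (by positivity : (0:ℝ) ≤ (k:ℝ)+1) (sq_nonneg mu)]
          calc ((k+1:ℕ):ℝ)*mu = Real.sqrt ((((k+1:ℕ):ℝ)*mu)^2) :=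
                (Real.sqrt_sq (by positivity)).symm
            _ ≤ _ := Real.sqrt_le_sqrt h3
        calc ‖(J mu)^[k+1] x - (J lam)^[0] x‖ ≤ ((k+1:ℕ):ℝ) * mu * ‖A x‖ := h1
          _ = ‖A x‖ * (((k+1:ℕ):ℝ)*mu) := by ring
          _ ≤ _ := mul_le_mul_of_nonneg_left h2 (norm_nonneg _)
      | succ n ihn =>
        have hw : (J mu)^[k] x ∈ closure D := hitermem mu hmu k x (hDsub hx)
        have hz : (J lam)^[n] x ∈ closure D := hitermem lam hlam n x (hDsub hx)
        have h1 := hkey lam mu hlam hmu _ hw _ hz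
        rw [← Function.iterate_succ_apply' (J mu) k x,
          ← Function.iterate_succ_apply' (J lam) n x] at h1
        set al := lam/(lam+mu) with hal
        set be := mu/(lam+mu) with hbe
        have hlm : (0:ℝ) < lam + mu := by positivity
        have hal0 : 0 ≤ al := by positivity
        have hbe0 : 0 ≤ be := by positivity
        have hs1 : al + be = 1 := by rw [hal, hbe]; field_simp
        set sA : ℝ := (((n+1:ℕ):ℝ)*lam - (k:ℝ)*mu)^2 + ((n+1:ℕ):ℝ)*lam^2 + (k:ℝ)*mu^2 with hsA
        set sB : ℝ := ((n:ℝ)*lam - ((k+1:ℕ):ℝ)*mu)^2 + (n:ℝ)*lam^2 + ((k+1:ℕ):ℝ)*mu^2 with hsB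
        set sC : ℝ := (((n+1:ℕ):ℝ)*lam - ((k+1:ℕ):ℝ)*mu)^2 + ((n+1:ℕ):ℝ)*lam^2
          + ((k+1:ℕ):ℝ)*mu^2 with hsC
        have hA := ihk (n+1)
        have hB := ihn
        have hsA0 : 0 ≤ sA := by rw [hsA]; push_cast; positivity
        have hsB0 : 0 ≤ sB := by rw [hsB]; push_cast; positivity
        have hcomb : al * sA + be * sB = sC := by
          rw [hal, hbe, hsA, hsB, hsC]
          push_cast
          field_simp
          ring
        calc ‖(J mu)^[k+1] x - (J lam)^[n+1] x‖
            ≤ al * ‖(J mu)^[k] x - (J lam)^[n+1] x‖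
              + be * ‖(J mu)^[k+1] x - (J lam)^[n] x‖ := h1
          _ ≤ al * (‖A x‖ * Real.sqrt sA) + be * (‖A x‖ * Real.sqrt sB) := by
              exact add_le_add (mul_le_mul_of_nonneg_left hA hal0)
                (mul_le_mul_of_nonneg_left hB hbe0)
          _ = ‖A x‖ * (al * Real.sqrt sA + be * Real.sqrt sB) := by ring
          _ ≤ ‖A x‖ * Real.sqrt (al * sA + be * sB) :=
              mul_le_mul_of_nonneg_left
                (sqrt_convex' sA sB al be hsA0 hsB0 hal0 hbe0 hs1) (norm_nonneg _)
          _ = ‖A x‖ * Real.sqrt sC := by rw [hcomb]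
  -- final assembly: density + uniform nonexpansiveness
  rw [Metric.cauchySeq_iff]
  intro eps heps
  obtain ⟨x, hxD, hxd⟩ := Metric.mem_closure_iff.mp hu₀ (eps/3) (by linarith)
  set C := ‖A x‖ + 1 with hCdef
  have hC0 : (0:ℝ) < C := by positivity
  have he0 : (0:ℝ) < eps/(3*C) := by positivity
  obtain ⟨N, hN⟩ := exists_nat_gt (2 * t^2 / (eps/(3*C))^2)
  refine ⟨N, fun m hm n hn => ?_⟩
  have hcross : ∀ p q : ℕ, N ≤ p → N ≤ q →
      ‖(J (t/((p:ℝ)+1)))^[p+1] x - (J (t/((q:ℝ)+1)))^[q+1] x‖ < eps/3 := by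
    intro p q hp hq
    have hpp : (0:ℝ) < (p:ℝ)+1 := by positivity
    have hqq : (0:ℝ) < (q:ℝ)+1 := by positivity
    have hlam : (0:ℝ) < t/((q:ℝ)+1) := by positivity
    have hmu : (0:ℝ) < t/((p:ℝ)+1) := by positivity
    have h1 := hmain (t/((q:ℝ)+1)) (t/((p:ℝ)+1)) hlam hmu x hxD (p+1) (q+1)
    have hNN : (0:ℝ) < (N:ℝ)+1 := by positivity
    have hsqlt : Real.sqrt ((((q+1:ℕ):ℝ)*(t/((q:ℝ)+1)) - ((p+1:ℕ):ℝ)*(t/((p:ℝ)+1)))^2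
        + ((q+1:ℕ):ℝ)*(t/((q:ℝ)+1))^2 + ((p+1:ℕ):ℝ)*(t/((p:ℝ)+1))^2) < eps/(3*C) := by
      rw [Real.sqrt_lt' he0]
      have e1 : (((q+1:ℕ):ℝ)*(t/((q:ℝ)+1)) - ((p+1:ℕ):ℝ)*(t/((p:ℝ)+1)))^2
          + ((q+1:ℕ):ℝ)*(t/((q:ℝ)+1))^2 + ((p+1:ℕ):ℝ)*(t/((p:ℝ)+1))^2
          = t^2/((q:ℝ)+1) + t^2/((p:ℝ)+1) := by
        push_cast
        field_simp
        ring
      rw [e1]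
      have hq1 : ((N:ℝ)+1) ≤ (q:ℝ)+1 := by
        have := (Nat.cast_le (α := ℝ)).mpr hq; linarith
      have hp1 : ((N:ℝ)+1) ≤ (p:ℝ)+1 := by
        have := (Nat.cast_le (α := ℝ)).mpr hp; linarith
      have h2 : t^2/((q:ℝ)+1) ≤ t^2/((N:ℝ)+1) := by gcongr
      have h3 : t^2/((p:ℝ)+1) ≤ t^2/((N:ℝ)+1) := by gcongr
      have he2 : (0:ℝ) < (eps/(3*C))^2 := by positivity
      have h4 : 2*t^2 < (N:ℝ) * (eps/(3*C))^2 := (div_lt_iff₀ he2).mp hN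
      have key : ∀ e2 : ℝ, 0 < e2 → 2*t^2 < (N:ℝ)*e2 → 2*(t^2/((N:ℝ)+1)) < e2 := by
        intro e2 he2' h4'
        rw [show 2 * (t^2/((N:ℝ)+1)) = 2*t^2 / ((N:ℝ)+1) by ring, div_lt_iff₀ hNN]
        nlinarith
      have h5 : 2 * (t^2/((N:ℝ)+1)) < (eps/(3*C))^2 := key _ he2 h4
      linarith
    have hAxC : ‖A x‖ ≤ C := by rw [hCdef]; linarith
    calc ‖(J (t/((p:ℝ)+1)))^[p+1] x - (J (t/((q:ℝ)+1)))^[q+1] x‖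
        ≤ ‖A x‖ * Real.sqrt ((((q+1:ℕ):ℝ)*(t/((q:ℝ)+1)) - ((p+1:ℕ):ℝ)*(t/((p:ℝ)+1)))^2
          + ((q+1:ℕ):ℝ)*(t/((q:ℝ)+1))^2 + ((p+1:ℕ):ℝ)*(t/((p:ℝ)+1))^2) := h1
      _ ≤ C * Real.sqrt ((((q+1:ℕ):ℝ)*(t/((q:ℝ)+1)) - ((p+1:ℕ):ℝ)*(t/((p:ℝ)+1)))^2
          + ((q+1:ℕ):ℝ)*(t/((q:ℝ)+1))^2 + ((p+1:ℕ):ℝ)*(t/((p:ℝ)+1))^2) :=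
          mul_le_mul_of_nonneg_right hAxC (Real.sqrt_nonneg _)
      _ < C * (eps/(3*C)) := by exact mul_lt_mul_of_pos_left hsqlt hC0
      _ = eps/3 := by field_simp
  have hm1 : (0:ℝ) < t/((m:ℝ)+1) := by positivity
  have hn1 : (0:ℝ) < t/((n:ℝ)+1) := by positivity
  have t1 : dist ((J (t/((m:ℝ)+1)))^[m+1] u₀) ((J (t/((m:ℝ)+1)))^[m+1] x) < eps/3 := by
    rw [dist_eq_norm]
    calc ‖(J (t/((m:ℝ)+1)))^[m+1] u₀ - (J (t/((m:ℝ)+1)))^[m+1] x‖ ≤ ‖u₀ - x‖ :=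
          hiterlip _ hm1 _ u₀ hu₀ x (hDsub hxD)
      _ < eps/3 := by rw [← dist_eq_norm]; exact hxd
  have t3 : dist ((J (t/((n:ℝ)+1)))^[n+1] x) ((J (t/((n:ℝ)+1)))^[n+1] u₀) < eps/3 := by
    rw [dist_eq_norm]
    calc ‖(J (t/((n:ℝ)+1)))^[n+1] x - (J (t/((n:ℝ)+1)))^[n+1] u₀‖ ≤ ‖x - u₀‖ :=
          hiterlip _ hn1 _ x (hDsub hxD) u₀ hu₀
      _ < eps/3 := by rw [← dist_eq_norm, dist_comm]; exact hxd
  have t2 : dist ((J (t/((m:ℝ)+1)))^[m+1] x) ((J (t/((n:ℝ)+1)))^[n+1] x) < eps/3 := by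
    rw [dist_eq_norm]; exact hcross m n hm hn
  calc dist ((J (t/((m:ℝ)+1)))^[m+1] u₀) ((J (t/((n:ℝ)+1)))^[n+1] u₀)
      ≤ dist ((J (t/((m:ℝ)+1)))^[m+1] u₀) ((J (t/((m:ℝ)+1)))^[m+1] x)
        + dist ((J (t/((m:ℝ)+1)))^[m+1] x) ((J (t/((n:ℝ)+1)))^[n+1] x)
        + dist ((J (t/((n:ℝ)+1)))^[n+1] x) ((J (t/((n:ℝ)+1)))^[n+1] u₀) :=
        dist_triangle4 _ _ _ _
    _ < eps/3 + eps/3 + eps/3 := by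
        exact add_lt_add (add_lt_add t1 t2) t3
    _ = eps := by ring
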